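/- Let V be a finite-dimensional complex vector space, C a non-degenerate symmetric bilinear form on V, and h, h' two Hermitian metrics on V both compatible with C, with real structures κ := Ψ_C^{-1} ∘ Ψ_h and κ' := Ψ_C^{-1} ∘ Ψ_{h'}. Let s := s(h,h') be the unique automorphism with h'(u,v) = h(s(u),v), which is positive self-adjoint with respect to h, and let s^{1/2} be its unique positive h-self-adjoint square root. Then: (1) s^{1/2} is an isometry with respect to C, i.e. C(s^{1/2}(u), s^{1/2}(v)) = C(u,v) for all u, v; (2) s^{1/2} ∘ κ' = κ ∘ s^{1/2}; (3) s^{1/2} maps the fixed-point set V_{ℝ,κ'} of κ' isomorphically (over ℝ) onto the fixed-point set V_{ℝ,κ} of κ, and this map is an isometry with respect to the restrictions of C. -/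

import Mathlib

noncomputable section

variable {V : Type*} [AddCommGroup V] [Module ℂ V] [FiniteDimensional ℂ V]

/-- `h` is a Hermitian metric on the complex vector space `V`:
it is additive and `ℂ`-linear in the first argument, Hermitian-symmetric
(hence conjugate-linear in the second argument), and positive definite. -/
def IsHermitianMetric (h : V → V → ℂ) : Prop :=
  (∀ u v w : V, h (u + v) w = h u w + h v w) ∧
  (∀ (a : ℂ) (u v : V), h (a • u) v = a * h u v) ∧
  (∀ u v : V, h u v = starRingEnd ℂ (h v u)) ∧
  (∀ v : V, v ≠ 0 → 0 < (h v v).re)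

/-- `C` is a non-degenerate symmetric `ℂ`-bilinear form on `V`. -/
def IsNondegSymmBilin (C : V → V → ℂ) : Prop :=
  (∀ u v w : V, C (u + v) w = C u w + C v w) ∧
  (∀ (a : ℂ) (u v : V), C (a • u) v = a * C u v) ∧
  (∀ u v : V, C u v = C v u) ∧
  (∀ v : V, (∀ u : V, C v u = 0) → v = 0)

/-- `Ψ_h : V → V^*`, `Ψ_h(u)(v) = h(v,u)`; it is conjugate-linear in `u`. -/
def PsiH (h : V → V → ℂ) : V → V → ℂ := fun u v => h v u

/-- The dual Hermitian metric `h^∨` on `V^* `: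
`h^∨(f,g) = h(Ψ_h⁻¹(g), Ψ_h⁻¹(f))`. -/
def dualMetric (h : V → V → ℂ) : (V → ℂ) → (V → ℂ) → ℂ :=
  fun f g => h (Function.invFun (PsiH h) g) (Function.invFun (PsiH h) f)

/-- `h` is compatible with the form `C` if `Ψ_C : V → V^*`, `Ψ_C(u) = C(u,·) = C u`,
is isometric with respect to `h` and `h^∨`, i.e. `h^∨(Ψ_C u, Ψ_C v) = h(u,v)`. -/
def Compatible (h C : V → V → ℂ) : Prop :=
  ∀ u v : V, dualMetric h (C u) (C v) = h u v

namespace HermAux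

variable {h : V → V → ℂ}

set_option linter.unusedSectionVars false

lemma zero_left (hh : IsHermitianMetric h) (v : V) : h 0 v = 0 := by
  have : h 0 v = h 0 v + h 0 v := by simpa using hh.1 0 0 v
  linear_combination -this

lemma zero_right (hh : IsHermitianMetric h) (v : V) : h v 0 = 0 := by
  rw [hh.2.2.1, zero_left hh, map_zero]

lemma add_right (hh : IsHermitianMetric h) (u v w : V) :
    h u (v + w) = h u v + h u w := by
  rw [hh.2.2.1, hh.1, map_add, ← hh.2.2.1, ← hh.2.2.1]

lemma smul_right (hh : IsHermitianMetric h) (a : ℂ) (u v : V) :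
    h u (a • v) = starRingEnd ℂ a * h u v := by
  rw [hh.2.2.1, hh.2.1, map_mul, ← hh.2.2.1]

lemma neg_left (hh : IsHermitianMetric h) (u v : V) : h (-u) v = -h u v := by
  have := hh.1 u (-u) v; rw [add_neg_cancel, zero_left hh] at this; linear_combination -this

lemma sub_left (hh : IsHermitianMetric h) (u w v : V) : h (u - w) v = h u v - h w v := by
  rw [sub_eq_add_neg, hh.1, neg_left hh, sub_eq_add_neg]

lemma sub_right (hh : IsHermitianMetric h) (u w v : V) : h u (w - v) = h u w - h u v := by
  rw [hh.2.2.1, sub_left hh, map_sub, ← hh.2.2.1, ← hh.2.2.1]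

lemma self_ne_zero (hh : IsHermitianMetric h) {v : V} (hv : v ≠ 0) : h v v ≠ 0 := by
  intro h0
  have := hh.2.2.2 v hv
  rw [h0] at this; simp at this

lemma eq_zero_of_self (hh : IsHermitianMetric h) {v : V} (hv : h v v = 0) : v = 0 := by
  by_contra hne
  exact self_ne_zero hh hne hv

lemma eq_of_forall_left (hh : IsHermitianMetric h) {x y : V}
    (hxy : ∀ v, h x v = h y v) : x = y := by
  have : h (x - y) (x - y) = 0 := by
    rw [sub_left hh, hxy, sub_self]
  have := eq_zero_of_self hh this
  exact sub_eq_zero.mp this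

end HermAux

set_option linter.unusedSectionVars false in
open HermAux in
/-- Uniqueness of the positive self-adjoint square root. -/
theorem sqrt_unique {h : V → V → ℂ} (hh : IsHermitianMetric h)
    (q r : V →ₗ[ℂ] V)
    (hqsa : ∀ u v, h (q u) v = h u (q v)) (hrsa : ∀ u v, h (r u) v = h u (r v))
    (hqpos : ∀ v, v ≠ 0 → 0 < (h (q v) v).re)
    (hrpos : ∀ v, v ≠ 0 → 0 < (h (r v) v).re)
    (hsq : ∀ v, q (q v) = r (r v)) : ∀ v, q v = r v := by
  set D : Module.End ℂ V := q - r with hD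
  have hDapp : ∀ v, D v = q v - r v := fun v => rfl
  have hDsa : ∀ u v, h (D u) v = h u (D v) := by
    intro u v
    rw [hDapp, hDapp, sub_left hh, sub_right hh, hqsa, hrsa]
  -- every eigenvalue of D is zero
  have heig : ∀ (μ : ℂ) (v : V), v ≠ 0 → D v = μ • v → μ = 0 := by
    intro μ v hv hμv
    by_contra hμ
    -- μ is real
    have hreal : starRingEnd ℂ μ = μ := by
      have h1 : h (D v) v = μ * h v v := by rw [hμv, hh.2.1]
      have h2 : h (D v) v = starRingEnd ℂ μ * h v v := by
        rw [hDsa, hμv, smul_right hh]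
      have := h1.symm.trans h2
      exact (mul_right_cancel₀ (self_ne_zero hh hv) this.symm)
    -- p := q + r ; D (p v) = - p (D v)
    have hanti : D (q v + r v) = -(q (D v) + r (D v)) := by
      simp only [hDapp, map_add, map_sub]
      rw [hsq v]; abel
    have key : h (D v) (q v + r v) = - (starRingEnd ℂ μ * h v (q v + r v)) := by
      have hq : q (D v) + r (D v) = μ • (q v + r v) := by
        rw [hμv, map_smul, map_smul, smul_add]
      rw [hDsa, hanti, hq, ← neg_smul, smul_right hh, map_neg]
      ring
    have key2 : h (D v) (q v + r v) = μ * h v (q v + r v) := by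
      rw [hμv, hh.2.1]
    have hvp : h v (q v + r v) = 0 := by
      rw [hreal] at key
      have hx : μ * h v (q v + r v) + μ * h v (q v + r v) = 0 := by
        linear_combination key - key2
      have h0 := add_self_eq_zero.mp hx
      exact (mul_eq_zero.mp h0).resolve_left hμ
    have hppos : 0 < (h (q v + r v) v).re := by
      rw [hh.1]
      have := hqpos v hv
      have := hrpos v hv
      simp only [Complex.add_re]
      positivity
    rw [hh.2.2.1, hvp] at hppos
    simp at hppos
  -- D is nilpotent: minpoly is a power of X
  have hshift : ∀ (n : ℕ) (u v : V), h ((D ^ n) u) v = h u ((D ^ n) v) := by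
    intro n
    induction n with
    | zero => intro u v; simp
    | succ k ih =>
      intro u v
      rw [pow_succ, Module.End.mul_apply, Module.End.mul_apply, ih, hDsa]
      congr 1
      rw [← Module.End.mul_apply, ← Module.End.mul_apply, ← pow_succ', ← pow_succ]
  have hstep : ∀ (n : ℕ) (v : V), (D ^ n) v = 0 → D v = 0 := by
    intro n
    induction n using Nat.strong_induction_on with
    | _ n ih =>
      intro v hv
      match n, ih, hv with
      | 0, _, hv => simp at hv; simp [hv]
      | 1, _, hv => simpa using hv
      | (m+2), ih, hv =>
        have h2 : (D ^ (2 * (m + 1))) v = 0 := by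
          have he : 2 * (m + 1) = m + (m + 2) := by ring
          rw [he, pow_add D m (m+2), Module.End.mul_apply, hv, map_zero]
        have h3 : h ((D ^ (m+1)) v) ((D ^ (m+1)) v) = 0 := by
          rw [hshift]
          have hcomp : (D ^ (m+1)) ((D ^ (m+1)) v) = (D ^ (2 * (m+1))) v := by
            rw [two_mul, pow_add D (m+1) (m+1), Module.End.mul_apply]
          rw [hcomp, h2, zero_right hh]
        have h4 : (D ^ (m+1)) v = 0 := eq_zero_of_self hh h3
        exact ih (m+1) (by omega) v h4
  -- minpoly route
  have hint : IsIntegral ℂ D := LinearMap.isIntegral D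
  have hmonic : (minpoly ℂ D).Monic := minpoly.monic hint
  have hsplits : (minpoly ℂ D).Splits := IsAlgClosed.splits _
  have hroots : ∀ μ ∈ (minpoly ℂ D).roots, μ = 0 := by
    intro μ hμ
    have : (minpoly ℂ D).IsRoot μ := Polynomial.isRoot_of_mem_roots hμ
    have hev : D.HasEigenvalue μ := (Module.End.hasEigenvalue_iff_isRoot).mpr this
    obtain ⟨v, hv⟩ := hev.exists_hasEigenvector
    exact heig μ v hv.right (Module.End.HasEigenvector.apply_eq_smul hv)
  have hP : minpoly ℂ D = Polynomial.X ^ (minpoly ℂ D).natDegree := by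
    have h1 := hsplits.eq_prod_roots_of_monic hmonic
    have h2 : ((minpoly ℂ D).roots.map fun a => Polynomial.X - Polynomial.C a).prod
        = Polynomial.X ^ Multiset.card (minpoly ℂ D).roots := by
      have hm : ((minpoly ℂ D).roots.map fun a => Polynomial.X - Polynomial.C a)
          = (minpoly ℂ D).roots.map (fun _ => (Polynomial.X : Polynomial ℂ)) :=
        Multiset.map_congr rfl (fun a ha => by rw [hroots a ha]; simp)
      rw [hm, Multiset.map_const', Multiset.prod_replicate]
    have h3 : Multiset.card (minpoly ℂ D).roots = (minpoly ℂ D).natDegree :=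
      Polynomial.splits_iff_card_roots.mp hsplits
    rw [h2, h3] at h1
    exact h1
  have hDn : (D ^ (minpoly ℂ D).natDegree) = 0 := by
    have := minpoly.aeval ℂ D
    rwa [hP, map_pow, Polynomial.aeval_X] at this
  intro v
  have h0 : D v = 0 := hstep _ v (by rw [hDn]; rfl)
  exact sub_eq_zero.mp ((hDapp v).symm.trans h0)


namespace HermAux

variable {C h0 : V → V → ℂ} {κ0 : V → V}

lemma C_zero (hC : IsNondegSymmBilin C) (v : V) : C 0 v = 0 := by
  have h1 := hC.1 0 0 v; rw [add_zero] at h1; linear_combination -h1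

lemma C_neg (hC : IsNondegSymmBilin C) (x v : V) : C (-x) v = -C x v := by
  have h1 := hC.1 x (-x) v; rw [add_neg_cancel, C_zero hC] at h1; linear_combination -h1

lemma C_sub (hC : IsNondegSymmBilin C) (x y v : V) : C (x - y) v = C x v - C y v := by
  rw [sub_eq_add_neg, hC.1, C_neg hC, sub_eq_add_neg]

lemma C_cancel (hC : IsNondegSymmBilin C) {x y : V} (hxy : ∀ v, C x v = C y v) : x = y := by
  have h0 : ∀ u, C (x - y) u = 0 := fun u => by rw [C_sub hC, hxy, sub_self]
  exact sub_eq_zero.mp (hC.2.2.2 _ h0)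

lemma kappa_add (hC : IsNondegSymmBilin C) (hh0 : IsHermitianMetric h0)
    (hκ0 : ∀ u v, C (κ0 u) v = h0 v u) (u w : V) : κ0 (u + w) = κ0 u + κ0 w := by
  apply C_cancel hC
  intro v
  rw [hκ0, hC.1, hκ0, hκ0, add_right hh0]

lemma kappa_smul (hC : IsNondegSymmBilin C) (hh0 : IsHermitianMetric h0)
    (hκ0 : ∀ u v, C (κ0 u) v = h0 v u) (a : ℂ) (u : V) :
    κ0 (a • u) = starRingEnd ℂ a • κ0 u := by
  apply C_cancel hC
  intro v
  rw [hκ0, hC.2.1, hκ0, smul_right hh0]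

lemma kappa_inj (hC : IsNondegSymmBilin C) (hh0 : IsHermitianMetric h0)
    (hκ0 : ∀ u v, C (κ0 u) v = h0 v u) : Function.Injective κ0 := by
  intro x y hxy
  apply eq_of_forall_left hh0
  intro v
  have h1 : h0 v x = h0 v y := by rw [← hκ0, ← hκ0, hxy]
  rw [hh0.2.2.1 x v, hh0.2.2.1 y v, h1]

lemma kappa_surj (hC : IsNondegSymmBilin C) (hh0 : IsHermitianMetric h0)
    (hκ0 : ∀ u v, C (κ0 u) v = h0 v u) : Function.Surjective κ0 := by
  let κℝ : V →ₗ[ℝ] V :=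
    { toFun := κ0
      map_add' := kappa_add hC hh0 hκ0
      map_smul' := by
        intro a v
        show κ0 ((a : ℝ) • v) = a • κ0 v
        rw [← Complex.coe_smul, kappa_smul hC hh0 hκ0,
          Complex.conj_ofReal, Complex.coe_smul] }
  have hk : Function.Injective κℝ := kappa_inj hC hh0 hκ0
  exact LinearMap.injective_iff_surjective.mp hk

lemma kappa_key (hC : IsNondegSymmBilin C) (hh0 : IsHermitianMetric h0)
    (hκ0 : ∀ u v, C (κ0 u) v = h0 v u) (hcompat0 : Compatible h0 C) (a b : V) :
    h0 (κ0 a) (κ0 b) = h0 b a := by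
  have hPsiinj : Function.Injective (PsiH h0) := by
    intro x y hxy
    apply eq_of_forall_left hh0
    intro v
    have h1 : h0 v x = h0 v y := congrFun hxy v
    rw [hh0.2.2.1 x v, hh0.2.2.1 y v, h1]
  have hCeq : ∀ a : V, C (κ0 a) = PsiH h0 a := fun a => funext fun v => hκ0 a v
  have hinv : ∀ a : V, Function.invFun (PsiH h0) (C (κ0 a)) = a := fun a => by
    rw [hCeq]; exact Function.leftInverse_invFun hPsiinj a
  have hcc := hcompat0 (κ0 a) (κ0 b)
  unfold dualMetric at hcc
  rw [hinv, hinv] at hcc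
  exact hcc.symm

lemma kappa_invol (hC : IsNondegSymmBilin C) (hh0 : IsHermitianMetric h0)
    (hκ0 : ∀ u v, C (κ0 u) v = h0 v u) (hcompat0 : Compatible h0 C) (a : V) :
    κ0 (κ0 a) = a := by
  apply C_cancel hC
  intro v
  obtain ⟨b, rfl⟩ := kappa_surj hC hh0 hκ0 v
  rw [hκ0 (κ0 a) (κ0 b), kappa_key hC hh0 hκ0 hcompat0, hC.2.2.1 a (κ0 b), hκ0]

end HermAux

open HermAux in
set_option linter.unusedSectionVars false in
/-- Let `h, h'` be Hermitian metrics both compatible with `C`, with real structures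
`κ, κ'` (so `C(κ u, v) = h(v,u)` and `C(κ' u, v) = h'(v,u)`).  Let `s := s(h,h')` be
the unique automorphism with `h'(u,v) = h(s u, v)` and let `r := s^{1/2}` be its
unique positive `h`-self-adjoint square root.  Then (1) `r` is a `C`-isometry;
(2) `r ∘ κ' = κ ∘ r`; (3) `r` maps the fixed-point set of `κ'` bijectively onto the
fixed-point set of `κ`, isometrically with respect to the restrictions of `C`. -/
theorem sqrt_s_isometry_and_real_structures
    (h h' C : V → V → ℂ) (hh : IsHermitianMetric h) (hh' : IsHermitianMetric h')
    (hC : IsNondegSymmBilin C) (hcompat : Compatible h C) (hcompat' : Compatible h' C)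
    (κ κ' : V → V) (hκ : ∀ u v : V, C (κ u) v = h v u)
    (hκ' : ∀ u v : V, C (κ' u) v = h' v u)
    (s : V ≃ₗ[ℂ] V) (hs : ∀ u v : V, h' u v = h (s u) v)
    (r : V →ₗ[ℂ] V) (hrsq : ∀ v : V, r (r v) = s v)
    (hrsa : ∀ u v : V, h (r u) v = h u (r v))
    (hrpos : ∀ v : V, v ≠ 0 → 0 < (h (r v) v).re) :
    (∀ u v : V, C (r u) (r v) = C u v) ∧
    (∀ v : V, r (κ' v) = κ (r v)) ∧
    Set.BijOn (⇑r) {v : V | κ' v = v} {v : V | κ v = v} ∧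
    (∀ u ∈ {v : V | κ' v = v}, ∀ w ∈ {v : V | κ' v = v}, C (r u) (r w) = C u w) := by
  have key : ∀ a b, h (κ a) (κ b) = h b a := kappa_key hC hh hκ hcompat
  have kk : ∀ a, κ (κ a) = a := kappa_invol hC hh hκ hcompat
  have kk' : ∀ a, κ' (κ' a) = a := kappa_invol hC hh' hκ' hcompat'
  have ksurj : Function.Surjective κ := kappa_surj hC hh hκ
  have kinj : Function.Injective κ := kappa_inj hC hh hκ
  have kzero : κ (0 : V) = 0 := by
    have h0 := kappa_add hC hh hκ 0 0
    rw [add_zero] at h0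
    exact left_eq_add.mp h0
  have knz : ∀ v : V, v ≠ 0 → κ v ≠ 0 := by
    intro v hv hkv
    apply hv
    have h1 := kk v
    rw [hkv, kzero] at h1
    exact h1.symm
  have kI : ∀ a y, h (κ a) y = h (κ y) a := by
    intro a y
    have h1 := key a (κ y)
    rwa [kk] at h1
  have kI2 : ∀ a y, h y (κ a) = h a (κ y) := by
    intro a y
    rw [hh.2.2.1 y (κ a), kI, ← hh.2.2.1]
  have ssa : ∀ u v, h (s u) v = h u (s v) := by
    intro u v
    rw [← hs, hh'.2.2.1, hs v u, ← hh.2.2.1]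
  have k's : ∀ u, κ' u = κ (s u) := by
    intro u
    apply C_cancel hC
    intro v
    rw [hκ', hκ, hs v u, ssa]
  have ks : ∀ z, κ (s z) = s.symm (κ z) := by
    intro z
    have hA : ∀ x, κ (s (κ (s x))) = x := by
      intro x
      have h1 := kk' x
      rw [k's, k's] at h1
      exact h1
    have hx : κ (s (s.symm (κ z))) = z := by rw [LinearEquiv.apply_symm_apply, kk]
    calc κ (s z) = κ (s (κ (s (s.symm (κ z))))) := by rw [hx]
    _ = s.symm (κ z) := hA _
  have rs : ∀ x, r (s x) = s (r x) := by
    intro x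
    rw [← hrsq x]
    exact hrsq (r x)
  have rssymm : ∀ x, r (s.symm x) = s.symm (r x) := by
    intro x
    apply s.injective
    rw [← rs, LinearEquiv.apply_symm_apply, LinearEquiv.apply_symm_apply]
  have ksymm : ∀ y, κ (s.symm y) = s (κ y) := by
    intro y
    have h1 := ks (s.symm y)
    rw [LinearEquiv.apply_symm_apply] at h1
    rw [h1, LinearEquiv.apply_symm_apply]
  let t : V →ₗ[ℂ] V :=
    { toFun := fun v => κ (r (κ v))
      map_add' := by
        intro x y
        show κ (r (κ (x + y))) = κ (r (κ x)) + κ (r (κ y))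
        rw [kappa_add hC hh hκ, map_add, kappa_add hC hh hκ]
      map_smul' := by
        intro a x
        show κ (r (κ (a • x))) = a • κ (r (κ x))
        rw [kappa_smul hC hh hκ, map_smul, kappa_smul hC hh hκ,
          Complex.conj_conj] }
  have tapp : ∀ v, t v = κ (r (κ v)) := fun v => rfl
  have tsa : ∀ u v, h (t u) v = h u (t v) := by
    intro u v
    rw [tapp, tapp, kI, ← hrsa, kI2]
  have tpos : ∀ v, v ≠ 0 → 0 < (h (t v) v).re := by
    intro v hv
    have h1 : h (t v) v = h (κ v) (r (κ v)) := by rw [tapp, kI]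
    rw [h1, hh.2.2.1]
    simpa using hrpos (κ v) (knz v hv)
  have tt : ∀ x, t (t x) = s.symm x := by
    intro x
    rw [tapp, tapp, kk, hrsq, ks, kk]
  have ts : ∀ x, t (s x) = s (t x) := by
    intro x
    rw [tapp, tapp, ks, rssymm, ksymm]
  have rinj : Function.Injective r := by
    intro x y hxy
    apply s.injective
    rw [← hrsq, ← hrsq, hxy]
  let Q : V →ₗ[ℂ] V := r ∘ₗ t ∘ₗ r
  have Qapp : ∀ v, Q v = r (t (r v)) := fun v => rfl
  have Qsa : ∀ u v, h (Q u) v = h u (Q v) := by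
    intro u v
    rw [Qapp, Qapp, hrsa, tsa, hrsa]
  have rnz : ∀ v : V, v ≠ 0 → r v ≠ 0 := by
    intro v hv h0
    exact hv (rinj (h0.trans (map_zero r).symm))
  have Qpos : ∀ v, v ≠ 0 → 0 < (h (Q v) v).re := by
    intro v hv
    have h1 : h (Q v) v = h (t (r v)) (r v) := by rw [Qapp, hrsa]
    rw [h1]
    exact tpos (r v) (rnz v hv)
  have Qsq : ∀ v, Q (Q v) = r (r v) := by
    intro v
    rw [Qapp, Qapp, hrsq (t (r v)), ts (t (r v)), tt (r v), LinearEquiv.apply_symm_apply]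
  have hQr : ∀ v, Q v = r v := sqrt_unique hh Q r Qsa hrsa Qpos hrpos Qsq
  have trv : ∀ v, t (r v) = v := by
    intro v
    apply rinj
    exact (Qapp v).symm.trans (hQr v)
  have rkr : ∀ v, r (κ (r v)) = κ v := by
    intro v
    have h1 := trv v
    rw [tapp] at h1
    have h2 := congrArg κ h1
    rwa [kk] at h2
  have rsurj : Function.Surjective r := by
    intro x
    exact ⟨r (s.symm x), by rw [hrsq, LinearEquiv.apply_symm_apply]⟩
  have goal2 : ∀ v, r (κ' v) = κ (r v) := by
    intro v
    rw [k's, ← hrsq v, rkr]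
  have goal1 : ∀ u v, C (r u) (r v) = C u v := by
    intro u v
    obtain ⟨a, rfl⟩ := ksurj u
    obtain ⟨b, rfl⟩ := rsurj a
    rw [rkr, hκ, hκ]
    exact hrsa v b
  have maps : Set.MapsTo (⇑r) {v : V | κ' v = v} {v : V | κ v = v} := by
    intro v hv
    simp only [Set.mem_setOf_eq] at hv ⊢
    rw [← goal2, hv]
  have surjOn : Set.SurjOn (⇑r) {v : V | κ' v = v} {v : V | κ v = v} := by
    intro w hw
    simp only [Set.mem_setOf_eq] at hw
    obtain ⟨v, rfl⟩ := rsurj w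
    refine ⟨v, ?_, rfl⟩
    simp only [Set.mem_setOf_eq]
    apply rinj
    rw [goal2]
    exact hw
  exact ⟨goal1, goal2, ⟨maps, rinj.injOn, surjOn⟩, fun u _ w _ => goal1 u w⟩
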